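/- Let a, a' ∈ ℝ^n, b' ∈ ℝ, and l ∈ ℝ^n with l ≥ 0. Let X_< := {x ∈ ℝ^n : x ≥ l ∧ a·x < 0}, X_≤ := {x ∈ ℝ^n : x ≥ l ∧ a·x ≤ 0}, and Y_≤ := {x ∈ ℝ^n : a'·x ≤ b'}. If X_< ≠ ∅, then X_< ⊆ Y_≤ if and only if X_≤ ⊆ Y_≤. -/

import Mathlib

open Matrix

/-- If `X_< = {x : x ≥ l ∧ a·x < 0}` is nonempty (with `l ≥ 0`), then
`X_< ⊆ Y_≤` iff `X_≤ ⊆ Y_≤`, where `X_≤ = {x : x ≥ l ∧ a·x ≤ 0}` and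
`Y_≤ = {x : a'·x ≤ b'}`. -/
theorem strict_subset_iff_le_subset
    {n : ℕ} (a a' : Fin n → ℝ) (b' : ℝ) (l : Fin n → ℝ) (hl : 0 ≤ l)
    (hX : ∃ x : Fin n → ℝ, l ≤ x ∧ a ⬝ᵥ x < 0) :
    ({x : Fin n → ℝ | l ≤ x ∧ a ⬝ᵥ x < 0} ⊆ {x : Fin n → ℝ | a' ⬝ᵥ x ≤ b'} ↔
      {x : Fin n → ℝ | l ≤ x ∧ a ⬝ᵥ x ≤ 0} ⊆ {x : Fin n → ℝ | a' ⬝ᵥ x ≤ b'}) := by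
  constructor
  · intro h x hx
    obtain ⟨x₀, hx₀l, hx₀a⟩ := hX
    rcases lt_or_eq_of_le hx.2 with h0 | h0
    · exact h ⟨hx.1, h0⟩
    · have key : ∀ t : ℝ, 0 < t → t ≤ 1 →
          a' ⬝ᵥ x + t * (a' ⬝ᵥ x₀ - a' ⬝ᵥ x) ≤ b' := by
        intro t ht ht1
        have hmem : x + t • (x₀ - x) ∈ {y : Fin n → ℝ | l ≤ y ∧ a ⬝ᵥ y < 0} := by
          constructor
          · intro i
            have h1 := hx.1 i
            have h2 := hx₀l i
            simp only [Pi.add_apply, Pi.smul_apply, Pi.sub_apply, smul_eq_mul]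
            nlinarith
          · have hd : a ⬝ᵥ (x + t • (x₀ - x)) = a ⬝ᵥ x + t * (a ⬝ᵥ x₀ - a ⬝ᵥ x) := by
              simp [dotProduct_add, dotProduct_smul, dotProduct_sub, smul_eq_mul]
            rw [hd, h0]
            nlinarith
        have hle := h hmem
        simp only [Set.mem_setOf_eq, dotProduct_add, dotProduct_smul, dotProduct_sub,
          smul_eq_mul] at hle
        linarith
      by_contra hc
      simp only [Set.mem_setOf_eq, not_le] at hc
      set c := a' ⬝ᵥ x₀ - a' ⬝ᵥ x with hcdef
      rcases le_or_gt 0 c with h1 | h1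
      · have := key 1 one_pos le_rfl; nlinarith
      · have hr : 0 < (b' - a' ⬝ᵥ x) / (2 * c) :=
          div_pos_of_neg_of_neg (by linarith) (by linarith)
        set t := min 1 ((b' - a' ⬝ᵥ x) / (2 * c)) with htdef
        have ht : 0 < t := lt_min one_pos hr
        have ht1 : t ≤ 1 := min_le_left _ _
        have htr : t ≤ (b' - a' ⬝ᵥ x) / (2 * c) := min_le_right _ _
        have hk := key t ht ht1
        have htc : t * c ≥ (b' - a' ⬝ᵥ x) / 2 := by
          have := mul_le_mul_of_nonpos_right htr (le_of_lt h1)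
          have h2c : (2 : ℝ) * c ≠ 0 := by linarith
          calc t * c ≥ ((b' - a' ⬝ᵥ x) / (2 * c)) * c := this
            _ = (b' - a' ⬝ᵥ x) / 2 := by rw [div_mul_eq_mul_div, mul_div_mul_right _ _ (ne_of_lt h1)]
        nlinarith
  · intro h x hx
    exact h ⟨hx.1, le_of_lt hx.2⟩
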